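/- Let (X,Ω) be a measurable space with X nonempty, E a Dedekind complete Banach lattice, and fix x ∈ X. For e ∈ E define the measure μ_e by μ_e(Δ) = e if x ∈ Δ and 0 otherwise. Then the map ψ : e ↦ μ_e is an isometric vector lattice homomorphism from E into the vector lattice M(X,Ω,E) of E-valued measures equipped with the norm ‖μ‖ = ‖|μ|(X)‖, and its image is a band in M(X,Ω,E). -/

import Mathlib

open scoped Classical

variable {X : Type*} [MeasurableSpace X]
variable {E : Type*} [NormedAddCommGroup E] [Lattice E] [HasSolidNorm E]
  [IsOrderedAddMonoid E] [NormedSpace ℝ E]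
  [CompleteSpace E]

/-- A finite `E⁺`-valued measure. -/
def IsFinMeasure (μ : Set X → E) : Prop :=
  μ ∅ = 0 ∧ (∀ Δ, MeasurableSet Δ → 0 ≤ μ Δ) ∧
    ∀ Δ : ℕ → Set X, (∀ n, MeasurableSet (Δ n)) →
      Pairwise (Function.onFun Disjoint Δ) →
      IsLUB (Set.range fun N => ∑ n ∈ Finset.range N, μ (Δ n))
        (μ (⋃ n, Δ n))

/-- Membership in `M(X,Ω,E)`, the span of the finite `E⁺`-valued measures. -/
def InSpanMeasures (μ : Set X → E) : Prop :=
  ∃ μ₁ μ₂ : Set X → E, IsFinMeasure μ₁ ∧ IsFinMeasure μ₂ ∧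
    ∀ Δ, MeasurableSet Δ → μ Δ = μ₁ Δ - μ₂ Δ

/-- The pointwise order on `M(X,Ω,E)`. -/
def MeasLE (μ ν : Set X → E) : Prop :=
  ∀ Δ, MeasurableSet Δ → μ Δ ≤ ν Δ

/-- The point-mass-like measure `μ_e` at a fixed point `x`. -/
noncomputable def psiMeas (x : X) (e : E) : Set X → E :=
  fun Δ => if x ∈ Δ then e else 0

lemma psi_finMeasure (x : X) {a : E} (ha : 0 ≤ a) : IsFinMeasure (psiMeas x a) := by
  refine ⟨by simp [psiMeas], fun Δ _ => ?_, fun Δ hΔ hdisj => ?_⟩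
  · unfold psiMeas; split <;> simp [ha]
  · by_cases hx : x ∈ ⋃ n, Δ n
    · obtain ⟨m, hm⟩ : ∃ m, x ∈ Δ m := by simpa using hx
      have hterm : ∀ n, psiMeas x a (Δ n) = if n = m then a else 0 := by
        intro n
        by_cases hnm : n = m
        · subst hnm; simp [psiMeas, hm]
        · have : x ∉ Δ n := fun hxn =>
            (hdisj hnm).le_bot (Set.mem_inter hxn hm)
          simp [psiMeas, this, hnm]
      have hsum : ∀ N, (∑ n ∈ Finset.range N, psiMeas x a (Δ n))
          = if m < N then a else 0 := by
        intro N
        simp only [hterm]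
        rw [Finset.sum_ite_eq' (Finset.range N) m (fun _ => a)]
        simp [Finset.mem_range]
      have hval : psiMeas x a (⋃ n, Δ n) = a := by simp [psiMeas, hx]
      rw [hval]
      constructor
      · rintro b ⟨N, rfl⟩
        dsimp only
        rw [hsum]; split <;> simp [ha]
      · intro b hb
        have h2 := hb ⟨m + 1, rfl⟩
        dsimp only at h2
        rw [hsum] at h2
        simpa using h2
    · have hterm : ∀ n, psiMeas x a (Δ n) = 0 := by
        intro n
        have : x ∉ Δ n := fun h => hx (Set.mem_iUnion.2 ⟨n, h⟩)
        simp [psiMeas, this]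
      have hval : psiMeas x a (⋃ n, Δ n) = 0 := by simp [psiMeas, hx]
      rw [hval]
      have : (Set.range fun N => ∑ n ∈ Finset.range N, psiMeas x a (Δ n)) = {0} := by
        simp [hterm]
      rw [this]
      exact isLUB_singleton

lemma finAdd {μ : Set X → E} (h : IsFinMeasure μ) {A B : Set X}
    (hA : MeasurableSet A) (hB : MeasurableSet B) (hAB : Disjoint A B) :
    μ (A ∪ B) = μ A + μ B := by
  obtain ⟨h0, hpos, hσ⟩ := h
  set Δ : ℕ → Set X := fun n => if n = 0 then A else if n = 1 then B else ∅ with hΔdef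
  have hmeas : ∀ n, MeasurableSet (Δ n) := by
    intro n; simp only [hΔdef]
    split; · exact hA
    split; · exact hB
    exact MeasurableSet.empty
  have hdisj : Pairwise (Function.onFun Disjoint Δ) := by
    intro m n hmn
    unfold Function.onFun
    match m, n, hmn with
    | 0, 0, hmn => exact absurd rfl hmn
    | 0, 1, _ => simpa [hΔdef] using hAB
    | 0, (k+2), _ => simp [hΔdef]
    | 1, 0, _ => simpa [hΔdef] using hAB.symm
    | 1, 1, hmn => exact absurd rfl hmn
    | 1, (k+2), _ => simp [hΔdef]
    | (k+2), n, _ => simp [hΔdef]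
  have hUnion : (⋃ n, Δ n) = A ∪ B := by
    apply Set.eq_of_subset_of_subset
    · intro y hy
      obtain ⟨n, hn⟩ := Set.mem_iUnion.1 hy
      simp only [hΔdef] at hn
      split at hn
      · exact Or.inl hn
      split at hn
      · exact Or.inr hn
      · exact absurd hn (Set.notMem_empty y)
    · rintro y (hy | hy)
      · exact Set.mem_iUnion.2 ⟨0, by simp [hΔdef, hy]⟩
      · exact Set.mem_iUnion.2 ⟨1, by simp [hΔdef, hy]⟩
  have hlub := hσ Δ hmeas hdisj
  rw [hUnion] at hlub
  have hsum2 : (∑ n ∈ Finset.range 2, μ (Δ n)) = μ A + μ B := by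
    rw [Finset.sum_range_succ, Finset.sum_range_succ, Finset.sum_range_zero]
    simp [hΔdef]
  have hsumN : ∀ N, 2 ≤ N → (∑ n ∈ Finset.range N, μ (Δ n)) = μ A + μ B := by
    intro N hN
    rw [← hsum2]
    apply (Finset.sum_subset (Finset.range_subset_range.2 hN) ?_).symm
    intro n _ hn
    have : Δ n = ∅ := by
      simp only [hΔdef]
      rw [if_neg, if_neg] <;> simp [Finset.mem_range] at hn <;> omega
    rw [this, h0]
  have hlub2 : IsLUB (Set.range fun N => ∑ n ∈ Finset.range N, μ (Δ n)) (μ A + μ B) := by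
    constructor
    · rintro b ⟨N, rfl⟩
      dsimp only
      rcases le_or_gt 2 N with hN | hN
      · rw [hsumN N hN]
      · rw [← hsumN 2 le_rfl]
        apply Finset.sum_le_sum_of_subset_of_nonneg (Finset.range_subset_range.2 hN.le)
        intro n _ _
        exact hpos _ (hmeas n)
    · intro b hb
      exact (hsum2 ▸ hb ⟨2, rfl⟩)
  exact hlub.unique hlub2

lemma psi_inSpan (x : X) (e : E) : InSpanMeasures (psiMeas x e) := by
  refine ⟨psiMeas x (e⁺), psiMeas x (e⁻), psi_finMeasure x (posPart_nonneg e),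
    psi_finMeasure x (negPart_nonneg e), fun Δ _ => ?_⟩
  unfold psiMeas
  split
  · exact (posPart_sub_negPart e).symm
  · simp

lemma span_split {ν : Set X → E} (h : InSpanMeasures ν) {Δ : Set X}
    (hΔ : MeasurableSet Δ) : ν Set.univ = ν Δ + ν Δᶜ := by
  obtain ⟨μ₁, μ₂, h1, h2, hd⟩ := h
  have hu : (Set.univ : Set X) = Δ ∪ Δᶜ := (Set.union_compl_self Δ).symm
  have d : Disjoint Δ Δᶜ := disjoint_compl_right
  rw [hd _ MeasurableSet.univ, hd _ hΔ, hd _ hΔ.compl, hu,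
    finAdd h1 hΔ hΔ.compl d, finAdd h2 hΔ hΔ.compl d]
  abel


/-- for `X ≠ ∅`, a Dedekind complete Banach lattice `E` and a
fixed `x ∈ X`, the map `ψ : e ↦ μ_e` is an isometric vector lattice
homomorphism of `E` into `M(X,Ω,E)` (normed by `‖μ‖ = ‖|μ|(X)‖`, and
`|ψ(e)| = ψ(|e|)`), whose image is a band. -/
theorem stmt_18
    (hDed : ∀ T : Set E, T.Nonempty → BddAbove T → ∃ a, IsLUB T a)
    (x : X) :
    -- `ψ` maps into `M(X,Ω,E)` and is linear
    (∀ e : E, InSpanMeasures (psiMeas x e)) ∧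
    (∀ e f : E, ∀ Δ : Set X,
      psiMeas x (e + f) Δ = psiMeas x e Δ + psiMeas x f Δ) ∧
    (∀ (c : ℝ) (e : E) (Δ : Set X), psiMeas x (c • e) Δ = c • psiMeas x e Δ) ∧
    -- `ψ` is a lattice homomorphism: `ψ(e ⊔ f)` is the supremum of
    -- `ψ(e)` and `ψ(f)` in `M(X,Ω,E)`
    (∀ e f : E, MeasLE (psiMeas x e) (psiMeas x (e ⊔ f)) ∧
      MeasLE (psiMeas x f) (psiMeas x (e ⊔ f)) ∧
      ∀ ρ : Set X → E, InSpanMeasures ρ → MeasLE (psiMeas x e) ρ →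
        MeasLE (psiMeas x f) ρ → MeasLE (psiMeas x (e ⊔ f)) ρ) ∧
    -- `ψ` is isometric for the norm `‖μ‖ = ‖|μ|(X)‖`, using `|ψ(e)| = ψ(|e|)`
    (∀ e : E, ‖psiMeas x |e| Set.univ‖ = ‖e‖) ∧
    -- the image of `ψ` is an ideal ...
    (∀ (ν : Set X → E), InSpanMeasures ν → ∀ e : E, 0 ≤ e →
      (∀ Δ, MeasurableSet Δ → 0 ≤ ν Δ ∧ ν Δ ≤ psiMeas x e Δ) →
      ∃ f : E, ∀ Δ, MeasurableSet Δ → ν Δ = psiMeas x f Δ) ∧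
    -- ... which is order closed, hence a band: a supremum (in `M(X,Ω,E)`) of
    -- a set of elements of the image again lies in the image
    ∀ D : Set (Set X → E), D.Nonempty →
      (∀ ρ ∈ D, ∃ f : E, ∀ Δ, MeasurableSet Δ → ρ Δ = psiMeas x f Δ) →
      ∀ ξ : Set X → E, InSpanMeasures ξ → (∀ ρ ∈ D, MeasLE ρ ξ) →
        (∀ σ : Set X → E, InSpanMeasures σ → (∀ ρ ∈ D, MeasLE ρ σ) →
          MeasLE ξ σ) →
        ∃ g : E, ∀ Δ, MeasurableSet Δ → ξ Δ = psiMeas x g Δ := by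
  refine ⟨psi_inSpan x, ?_, ?_, ?_, ?_, ?_, ?_⟩
  · intro e f Δ; unfold psiMeas; split <;> simp
  · intro c e Δ; unfold psiMeas; split <;> simp
  · intro e f
    refine ⟨fun Δ _ => ?_, fun Δ _ => ?_, ?_⟩
    · unfold psiMeas; split <;> simp
    · unfold psiMeas; split <;> simp
    · intro ρ _ h1 h2 Δ hΔ
      have g1 := h1 Δ hΔ
      have g2 := h2 Δ hΔ
      unfold psiMeas at g1 g2 ⊢
      split
      next hx =>
        rw [if_pos hx] at g1 g2
        exact sup_le g1 g2
      next hx =>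
        rw [if_neg hx] at g1
        exact g1
  · intro e; simp [psiMeas, norm_abs_eq_norm]
  · intro ν hν e he hb
    refine ⟨ν Set.univ, fun Δ hΔ => ?_⟩
    have hzero : ∀ Δ', MeasurableSet Δ' → x ∉ Δ' → ν Δ' = 0 := by
      intro Δ' hΔ' hx
      obtain ⟨h0, h1⟩ := hb Δ' hΔ'
      rw [psiMeas, if_neg hx] at h1
      exact le_antisymm h1 h0
    unfold psiMeas
    split
    next hx =>
      have := span_split hν hΔ
      rw [hzero Δᶜ hΔ.compl (by simp [hx]), add_zero] at this
      exact this.symm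
    next hx => exact hzero Δ hΔ hx
  · intro D hD hDim ξ hξ hub hlub
    obtain ⟨ρ₀, hρ₀⟩ := hD
    obtain ⟨f₀, hf₀⟩ := hDim ρ₀ hρ₀
    have hzero : ∀ Δ', MeasurableSet Δ' → x ∉ Δ' → ξ Δ' = 0 := by
      intro Δ' hΔ' hx
      have hlo : (0 : E) ≤ ξ Δ' := by
        have := hub ρ₀ hρ₀ Δ' hΔ'
        rwa [hf₀ Δ' hΔ', psiMeas, if_neg hx] at this
      have hσub : ∀ ρ ∈ D, MeasLE ρ (psiMeas x (ξ Set.univ)) := by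
        intro ρ hρ Δ hΔ
        obtain ⟨f, hf⟩ := hDim ρ hρ
        rw [hf Δ hΔ]
        unfold psiMeas
        split
        next =>
          have h1 := hub ρ hρ Set.univ MeasurableSet.univ
          rwa [hf Set.univ MeasurableSet.univ, psiMeas,
            if_pos (Set.mem_univ x)] at h1
        next => exact le_rfl
      have hhi := hlub (psiMeas x (ξ Set.univ)) (psi_inSpan x _) hσub Δ' hΔ'
      rw [psiMeas, if_neg hx] at hhi
      exact le_antisymm hhi hlo
    refine ⟨ξ Set.univ, fun Δ hΔ => ?_⟩
    unfold psiMeas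
    split
    next hx =>
      have := span_split hξ hΔ
      rw [hzero Δᶜ hΔ.compl (by simp [hx]), add_zero] at this
      exact this.symm
    next hx => exact hzero Δ hΔ hx
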